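/- Let W_1,...,W_r be subspaces of a vector space V over a field. There exist vectors w_1 ∈ W_1, ..., w_r ∈ W_r that are linearly independent if and only if for every subset I ⊆ {1,...,r}, dim(∑_{i∈I} W_i) ≥ |I|. -/

import Mathlib

open Cardinal Submodule

section RadoAux

variable {F : Type*} [Field F] {V : Type*} [AddCommGroup V] [Module F V]

private lemma rado_rank_sup (U S : Submodule F V) :
    Module.rank F ↥(S ⊔ U) = Module.rank F ↥(S.map U.mkQ) + Module.rank F ↥U := by
  set f : ↥(S ⊔ U) →ₗ[F] V ⧸ U := U.mkQ ∘ₗ (S ⊔ U).subtype with hf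
  have hr : LinearMap.range f = S.map U.mkQ := by
    rw [hf, LinearMap.range_comp, Submodule.range_subtype, Submodule.map_sup,
      Submodule.mkQ_map_self, sup_bot_eq]
  have hk : LinearMap.ker f = Submodule.comap (S ⊔ U).subtype U := by
    rw [hf, LinearMap.ker_comp, Submodule.ker_mkQ]
  have h1 := LinearMap.rank_range_add_rank_ker f
  rw [hr, hk, (Submodule.comapSubtypeEquivOfLe (le_sup_right : U ≤ S ⊔ U)).rank_eq] at h1
  exact h1.symm


private lemma rado_map_sup {V' : Type*} [AddCommGroup V'] [Module F V']
    (q : V →ₗ[F] V') {α : Type*} (s : Finset α) (f : α → Submodule F V) :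
    Submodule.map q (⨆ i ∈ s, f i) = ⨆ i ∈ s, (f i).map q := by
  classical
  rw [← Finset.sup_eq_iSup, ← Finset.sup_eq_iSup]
  induction s using Finset.induction with
  | empty => simp
  | insert _ _ h ih => rw [Finset.sup_insert, Finset.sup_insert, Submodule.map_sup, ih]

private lemma rado_combine {ι : Type} [Fintype ι] (U : Submodule F V) (P : ι → Prop)
    [DecidablePred P] (w : ι → V) (hmem : ∀ i, P i → w i ∈ U)
    (h1 : LinearIndependent F (fun i : {i // P i} => w i.1))
    (h2 : LinearIndependent F (fun i : {i // ¬ P i} => U.mkQ (w i.1))) :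
    LinearIndependent F w := by
  rw [Fintype.linearIndependent_iff]
  intro g hg
  have key : ∀ i : {i // ¬ P i}, g i.1 = 0 := by
    have hq : ∑ i : {i // ¬ P i}, g i.1 • U.mkQ (w i.1) = 0 := by
      have h0 := congrArg U.mkQ hg
      rw [map_sum, map_zero] at h0
      simp only [map_smul] at h0
      rw [← Finset.sum_filter_add_sum_filter_not Finset.univ P] at h0
      have hz : ∑ i ∈ Finset.univ.filter P, g i • U.mkQ (w i) = 0 := by
        refine Finset.sum_eq_zero fun i hi => ?_
        have hwi : w i ∈ U := hmem i (Finset.mem_filter.mp hi).2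
        rw [Submodule.mkQ_apply, (Submodule.Quotient.mk_eq_zero U).mpr hwi, smul_zero]
      rw [hz, zero_add] at h0
      rw [← h0]
      exact (Finset.sum_subtype (Finset.univ.filter fun i => ¬ P i)
        (fun x => by simp) (fun i => g i • U.mkQ (w i))).symm
    exact Fintype.linearIndependent_iff.mp h2 (fun i => g i.1) hq
  have hgP : ∑ i : {i // P i}, g i.1 • w i.1 = 0 := by
    rw [← Finset.sum_filter_add_sum_filter_not Finset.univ P] at hg
    have hz : ∑ i ∈ Finset.univ.filter (fun i => ¬ P i), g i • w i = 0 := by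
      refine Finset.sum_eq_zero fun i hi => ?_
      rw [key ⟨i, (Finset.mem_filter.mp hi).2⟩, zero_smul]
    rw [hz, add_zero] at hg
    rw [← hg]
    exact (Finset.sum_subtype (Finset.univ.filter fun i => P i)
      (fun x => by simp) (fun i => g i • w i)).symm
  have keyP := Fintype.linearIndependent_iff.mp h1 (fun i => g i.1) hgP
  intro i
  by_cases hP : P i
  · exact keyP ⟨i, hP⟩
  · exact key ⟨i, hP⟩

private lemma rado_aux {F : Type*} [Field F] :
    ∀ (n : ℕ) {V : Type*} [AddCommGroup V] [Module F V]
      (ι : Type) [Fintype ι] (_ : Fintype.card ι ≤ n) (W : ι → Submodule F V),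
      (∀ I : Finset ι, (I.card : Cardinal) ≤ Module.rank F ↥(⨆ i ∈ I, W i)) →
      ∃ w : ι → V, (∀ i, w i ∈ W i) ∧ LinearIndependent F w := by
  intro n
  induction n with
  | zero =>
    intro V _ _ ι _ hcard W _
    haveI : IsEmpty ι := Fintype.card_eq_zero_iff.mp (Nat.le_zero.mp hcard)
    exact ⟨fun _ => 0, fun i => (IsEmpty.false i).elim, linearIndependent_empty_type⟩
  | succ n IH =>
    intro V _ _ ι _ hcard W hW
    classical
    by_cases hle : Fintype.card ι ≤ n
    · exact IH ι hle W hW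
    have hcardι : Fintype.card ι = n + 1 := le_antisymm hcard (not_le.mp hle)
    haveI : Nonempty ι := Fintype.card_pos_iff.mp (by omega)
    by_cases hcrit : ∃ I : Finset ι, I.Nonempty ∧ I ≠ Finset.univ ∧
        Module.rank F ↥(⨆ i ∈ I, W i) ≤ I.card
    · -- Case B: there is a critical set I₀
      obtain ⟨I₀, hne, hproper, hrankle⟩ := hcrit
      set U : Submodule F V := ⨆ i ∈ I₀, W i with hU
      have hcardI₀ : I₀.card ≤ n := by
        have := Finset.card_lt_card ((Finset.subset_univ I₀).ssubset_of_ne hproper)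
        rw [Finset.card_univ, hcardι] at this
        omega
      -- representatives inside I₀
      have hW1 : ∀ J : Finset {i // i ∈ I₀},
          (J.card : Cardinal) ≤ Module.rank F ↥(⨆ j ∈ J, W j.1) := by
        intro J
        have h := hW (J.map (Function.Embedding.subtype _))
        rwa [Finset.card_map, ← Finset.sup_eq_iSup, Finset.sup_map,
          Finset.sup_eq_iSup] at h
      obtain ⟨u, hu_mem, hu_ind⟩ := IH {i // i ∈ I₀}
        (by rw [Fintype.card_coe]; exact hcardI₀) (fun j => W j.1) hW1
      -- representatives outside I₀, modulo U
      have hW2 : ∀ J : Finset {i // i ∉ I₀},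
          (J.card : Cardinal) ≤ Module.rank F ↥(⨆ j ∈ J, (W j.1).map U.mkQ) := by
        intro J
        set J' : Finset ι := J.map (Function.Embedding.subtype _) with hJ'
        set S : Submodule F V := ⨆ i ∈ J', W i with hS
        have hmapeq : (⨆ j ∈ J, (W j.1).map U.mkQ) = S.map U.mkQ := by
          rw [hS, rado_map_sup, hJ', ← Finset.sup_eq_iSup, ← Finset.sup_eq_iSup,
            Finset.sup_map]
          rfl
        have hdisj : Disjoint J' I₀ := by
          rw [Finset.disjoint_left]
          rintro a ha haI
          obtain ⟨b, _, rfl⟩ := Finset.mem_map.mp ha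
          exact b.2 haI
        have hsup : (⨆ i ∈ (J' ∪ I₀), W i) = S ⊔ U := by
          rw [hS, hU, ← Finset.sup_eq_iSup, ← Finset.sup_eq_iSup, ← Finset.sup_eq_iSup,
            Finset.sup_union]
        have hcardu : ((J' ∪ I₀).card : Cardinal) = (J.card : Cardinal) + I₀.card := by
          rw [Finset.card_union_of_disjoint hdisj, Finset.card_map, Nat.cast_add]
        have hHall := hW (J' ∪ I₀)
        rw [hsup, hcardu, rado_rank_sup U S] at hHall
        have hHall2 : (J.card : Cardinal) + I₀.card ≤
            Module.rank F ↥(S.map U.mkQ) + I₀.card :=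
          hHall.trans (add_le_add le_rfl hrankle)
        rw [hmapeq]
        exact (Cardinal.add_le_add_iff_of_lt_aleph0 (Cardinal.nat_lt_aleph0 _)).mp hHall2
      have hcard2 : Fintype.card {i // i ∉ I₀} ≤ n := by
        have h1 : Fintype.card {i // ¬ i ∈ I₀} =
            Fintype.card ι - Fintype.card {i // i ∈ I₀} :=
          Fintype.card_subtype_compl _
        rw [Fintype.card_coe] at h1
        rw [h1, hcardι]
        have := hne.card_pos
        omega
      obtain ⟨v, hv_mem, hv_ind⟩ := IH {i // i ∉ I₀} hcard2
        (fun j => (W j.1).map U.mkQ) hW2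
      have hlift : ∀ j : {i // i ∉ I₀}, ∃ x, x ∈ W j.1 ∧ U.mkQ x = v j := by
        intro j
        obtain ⟨x, hx, hxq⟩ := Submodule.mem_map.mp (hv_mem j)
        exact ⟨x, hx, hxq⟩
      choose t ht_mem ht_q using hlift
      refine ⟨fun i => if h : i ∈ I₀ then u ⟨i, h⟩ else t ⟨i, h⟩, fun i => ?_, ?_⟩
      · by_cases h : i ∈ I₀ <;> simp only [h, dif_pos, dif_neg, not_false_iff]
        · exact hu_mem ⟨i, h⟩
        · exact ht_mem ⟨i, h⟩
      · refine rado_combine U (fun i => i ∈ I₀) _ (fun i hi => ?_) ?_ ?_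
        · simp only [hi, dif_pos]
          exact le_iSup₂ (f := fun i (_ : i ∈ I₀) => W i) i hi (hu_mem ⟨i, hi⟩)
        · have : (fun j : {i // i ∈ I₀} =>
              (if h : j.1 ∈ I₀ then u ⟨j.1, h⟩ else t ⟨j.1, h⟩)) = u := by
            funext j; simp [j.2]
          rw [this]; exact hu_ind
        · have : (fun j : {i // ¬ i ∈ I₀} =>
              U.mkQ (if h : j.1 ∈ I₀ then u ⟨j.1, h⟩ else t ⟨j.1, h⟩)) = v := by
            funext j
            rw [dif_neg j.2, ht_q ⟨j.1, j.2⟩]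
          rw [this]; exact hv_ind
    · -- Case A: no critical set
      push_neg at hcrit
      obtain ⟨i₀⟩ := ‹Nonempty ι›
      have hWi₀ : 0 < Module.rank F ↥(W i₀) := by
        have h := hW {i₀}
        have he : (⨆ i ∈ ({i₀} : Finset ι), W i) = W i₀ := by simp
        rw [he, Finset.card_singleton, Nat.cast_one] at h
        exact lt_of_lt_of_le zero_lt_one h
      obtain ⟨x₀, hx₀⟩ := rank_pos_iff_exists_ne_zero.mp hWi₀
      set w₀ : V := (x₀ : V) with hw₀def
      have hw₀mem : w₀ ∈ W i₀ := x₀.2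
      have hw₀ne : w₀ ≠ 0 := fun h => hx₀ (Subtype.ext h)
      set U : Submodule F V := F ∙ w₀ with hU
      have hUrank : Module.rank F ↥U ≤ 1 := by
        refine (rank_span_le _).trans ?_
        simp
      have hW2 : ∀ J : Finset {i // i ≠ i₀},
          (J.card : Cardinal) ≤ Module.rank F ↥(⨆ j ∈ J, (W j.1).map U.mkQ) := by
        intro J
        rcases J.eq_empty_or_nonempty with rfl | hJne
        · simp
        set J' : Finset ι := J.map (Function.Embedding.subtype _) with hJ'
        set S : Submodule F V := ⨆ i ∈ J', W i with hS
        have hmapeq : (⨆ j ∈ J, (W j.1).map U.mkQ) = S.map U.mkQ := by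
          rw [hS, rado_map_sup, hJ', ← Finset.sup_eq_iSup, ← Finset.sup_eq_iSup,
            Finset.sup_map]
          rfl
        have hJ'ne : J'.Nonempty := hJne.map
        have hJ'proper : J' ≠ Finset.univ := by
          intro h
          have : i₀ ∈ J' := h ▸ Finset.mem_univ i₀
          obtain ⟨b, _, hb⟩ := Finset.mem_map.mp this
          exact b.2 hb
        have hstrict := hcrit J' hJ'ne hJ'proper
        have h1 : (J'.card : Cardinal) + 1 ≤ Module.rank F ↥S :=
          (Cardinal.add_one_le_succ _).trans (Order.succ_le_of_lt hstrict)
        have h2 : Module.rank F ↥S ≤ Module.rank F ↥(S.map U.mkQ) + 1 := by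
          calc Module.rank F ↥S ≤ Module.rank F ↥(S ⊔ U) :=
                Submodule.rank_mono le_sup_left
            _ = Module.rank F ↥(S.map U.mkQ) + Module.rank F ↥U := rado_rank_sup U S
            _ ≤ Module.rank F ↥(S.map U.mkQ) + 1 := add_le_add le_rfl hUrank
        have h3 : (J.card : Cardinal) + 1 ≤ Module.rank F ↥(S.map U.mkQ) + 1 := by
          rw [hJ', Finset.card_map] at h1
          exact h1.trans h2
        rw [hmapeq]
        exact (Cardinal.add_le_add_iff_of_lt_aleph0 Cardinal.one_lt_aleph0).mp h3
      have hcard2 : Fintype.card {i // i ≠ i₀} ≤ n := by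
        have h1 : Fintype.card {i // ¬ i = i₀} =
            Fintype.card ι - Fintype.card {i // i = i₀} :=
          Fintype.card_subtype_compl _
        rw [Fintype.card_subtype_eq] at h1
        rw [h1, hcardι] at *
        omega
      obtain ⟨v, hv_mem, hv_ind⟩ := IH {i // i ≠ i₀} hcard2
        (fun j => (W j.1).map U.mkQ) hW2
      have hlift : ∀ j : {i // i ≠ i₀}, ∃ x, x ∈ W j.1 ∧ U.mkQ x = v j := by
        intro j
        obtain ⟨x, hx, hxq⟩ := Submodule.mem_map.mp (hv_mem j)
        exact ⟨x, hx, hxq⟩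
      choose t ht_mem ht_q using hlift
      refine ⟨fun i => if h : i = i₀ then w₀ else t ⟨i, h⟩, fun i => ?_, ?_⟩
      · by_cases h : i = i₀
        · subst h; simp only [dif_pos]; exact hw₀mem
        · simp only [dif_neg h]; exact ht_mem ⟨i, h⟩
      · refine rado_combine U (fun i => i = i₀) _ (fun i hi => ?_) ?_ ?_
        · simp only [hi, dif_pos]
          exact Submodule.mem_span_singleton_self w₀
        · haveI : Unique {i // i = i₀} := ⟨⟨⟨i₀, rfl⟩⟩, fun j => Subtype.ext j.2⟩
          refine linearIndependent_unique_iff.mpr ?_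
          simp only [dif_pos (show ((default : {i // i = i₀}) : ι) = i₀ from
            (default : {i // i = i₀}).2)]
          exact hw₀ne
        · have : (fun j : {i // ¬ i = i₀} =>
              U.mkQ (if h : j.1 = i₀ then w₀ else t ⟨j.1, h⟩)) = v := by
            funext j
            rw [dif_neg j.2, ht_q ⟨j.1, j.2⟩]
          rw [this]; exact hv_ind

end RadoAux

/-- **Rado's theorem (linearized Hall's theorem).** For subspaces `W 1, ..., W r` of a
vector space `V` over a field `F`, a system of linearly independent representatives
`w i ∈ W i` exists if and only if `dim (∑_{i ∈ I} W i) ≥ |I|` for every `I ⊆ [r]`. -/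
theorem rado {F V : Type*} [Field F] [AddCommGroup V] [Module F V] {r : ℕ}
    (W : Fin r → Submodule F V) :
    (∃ w : Fin r → V, (∀ i, w i ∈ W i) ∧ LinearIndependent F w) ↔
      ∀ I : Finset (Fin r), (I.card : Cardinal) ≤ Module.rank F ↥(⨆ i ∈ I, W i) := by
  constructor
  · rintro ⟨w, hmem, hind⟩ I
    have hind' : LinearIndependent F
        (fun i : {x // x ∈ I} => (⟨w i.1, le_iSup₂ (f := fun i (_ : i ∈ I) => W i) i.1 i.2
          (hmem i.1)⟩ : ↥(⨆ i ∈ I, W i))) := by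
      have h := hind.comp (Subtype.val : {x // x ∈ I} → Fin r) Subtype.val_injective
      exact h.of_comp (⨆ i ∈ I, W i).subtype
    have := hind'.cardinal_lift_le_rank
    simpa [Cardinal.mk_coe_finset] using this
  · intro hW
    exact rado_aux r (Fin r) (by simp) W hW
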